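/- For every cardinal κ, the alternating group Alt(κ), endowed with any Hausdorff shift-invariant topology (a topology for which all two-sided translations x ↦ axb are homeomorphisms), is a σ-discrete topological space: it is a countable union of discrete subspaces. -/

import Mathlib

open Equiv

universe u

/-- The alternating group on an arbitrary type `α`: the subgroup of `Equiv.Perm α`
generated by products of two transpositions. -/
def altGroup (α : Type*) [DecidableEq α] : Subgroup (Equiv.Perm α) :=
  Subgroup.closure {σ | ∃ τ₁ τ₂ : Equiv.Perm α, τ₁.IsSwap ∧ τ₂.IsSwap ∧ σ = τ₁ * τ₂}

namespace AltSigma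

variable {α : Type u} [DecidableEq α]

/-- The support of a permutation, as a set. -/
def sp (f : Perm α) : Set α := {a | f a ≠ a}

theorem fix_of_not_mem_sp {f : Perm α} {a : α} (h : a ∉ sp f) : f a = a := not_not.mp h

theorem sp_apply_mem {f : Perm α} {a : α} (h : a ∈ sp f) : f a ∈ sp f :=
  fun h2 => h (f.injective h2)

theorem sp_finite {f : Perm α} (hf : f ∈ altGroup α) : (sp f).Finite := by
  induction hf using Subgroup.closure_induction with
  | mem x hx =>
      obtain ⟨τ₁, τ₂, ⟨p, q, hpq, rfl⟩, ⟨r, w, hrw, rfl⟩, rfl⟩ := hx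
      apply ((((Set.finite_singleton w).insert r).insert q).insert p).subset
      intro x hx
      by_contra h
      simp only [Set.mem_insert_iff, Set.mem_singleton_iff, not_or] at h
      obtain ⟨h1, h2, h3, h4⟩ := h
      exact hx (by simp [Perm.mul_apply, swap_apply_of_ne_of_ne, h1, h2, h3, h4])
  | one =>
      exact Set.finite_empty.subset (fun a ha => ha rfl)
  | mul x y hx hy ihx ihy =>
      apply (ihx.union ihy).subset
      intro a ha
      by_cases h : y a = a
      · exact Or.inl (by simpa [sp, Perm.mul_apply, h] using ha)
      · exact Or.inr h
  | inv x hx ih =>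
      apply ih.subset
      intro a ha
      intro h
      exact ha (Equiv.Perm.inv_eq_iff_eq.mpr h.symm)

theorem commute_of_fixes {g u : Perm α} (h : ∀ a ∈ sp u, g a = a) : g * u = u * g := by
  ext x
  simp only [Perm.mul_apply]
  by_cases hx : u x = x
  · rw [hx]
    by_cases hgx : u (g x) = g x
    · rw [hgx]
    · have h1 : g (g x) = g x := h _ hgx
      have h2 : g x = x := by
        simpa using congrArg g.symm h1
      rw [h2]
      exact hx.symm
  · have h1 := h x hx
    have h2 := h (u x) (sp_apply_mem hx)
    rw [h2, h1]

/-- The 3-cycle `p → q → r → p`. -/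
def cyc (p q r : α) : Perm α := swap p q * swap q r

theorem cyc_mem {p q r : α} (h1 : p ≠ q) (h2 : q ≠ r) : cyc p q r ∈ altGroup α :=
  Subgroup.subset_closure ⟨swap p q, swap q r, ⟨p, q, h1, rfl⟩, ⟨q, r, h2, rfl⟩, rfl⟩

theorem sp_cyc_subset (p q r : α) : sp (cyc p q r) ⊆ {p, q, r} := by
  intro x hx
  by_contra h
  simp only [Set.mem_insert_iff, Set.mem_singleton_iff, not_or] at h
  exact hx (by simp [cyc, Perm.mul_apply, swap_apply_of_ne_of_ne, h.1, h.2.1, h.2.2])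

theorem cyc_apply_fst {p q r : α} (h1 : p ≠ q) (h2 : p ≠ r) : cyc p q r p = q := by
  simp [cyc, Perm.mul_apply, swap_apply_of_ne_of_ne h1 h2]

theorem cyc_apply_thrd (p q r : α) : cyc p q r r = p := by
  simp [cyc, Perm.mul_apply]

theorem cyc_apply_of_ne {p q r x : α} (h1 : x ≠ p) (h2 : x ≠ q) (h3 : x ≠ r) :
    cyc p q r x = x := by
  simp [cyc, Perm.mul_apply, swap_apply_of_ne_of_ne, h1, h2, h3]

theorem cyc_conj (g : Perm α) (p q r : α) :
    g * cyc p q r * g⁻¹ = cyc (g p) (g q) (g r) := by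
  simp only [cyc, swap_apply_apply]
  group

end AltSigma

open AltSigma

/-- The alternating group `Alt(α)`, endowed with any Hausdorff shift-invariant topology
(all two-sided translations `x ↦ a * x * b` are homeomorphisms), is σ-discrete:
a countable union of discrete subspaces. -/
theorem alt_sigma_discrete (α : Type u) [DecidableEq α]
    (t : TopologicalSpace (altGroup α)) (ht2 : @T2Space (altGroup α) t)
    (hshift : ∀ a b : altGroup α,
      @IsHomeomorph (altGroup α) (altGroup α) t t (fun x => a * x * b)) :
    ∃ D : ℕ → Set (altGroup α), (⋃ n, D n) = Set.univ ∧
      ∀ n, @DiscreteTopology (D n) (TopologicalSpace.induced Subtype.val t) := by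
  classical
  letI : TopologicalSpace (altGroup α) := t
  haveI := ht2
  -- basic open sets
  have hne_open : ∀ c d : altGroup α, IsOpen {x : altGroup α | x * c ≠ d * x} := by
    intro c d
    have h1 : Continuous (fun x : altGroup α => x * c) := by
      simpa using (hshift 1 c).continuous
    have h2 : Continuous (fun x : altGroup α => d * x) := by
      simpa using (hshift d 1).continuous
    exact (isClosed_eq h1 h2).isOpen_compl
  cases finite_or_infinite α with
  | inl hfin =>
      refine ⟨fun _ => Set.univ, Set.iUnion_const _, fun n => ?_⟩
      haveI : DiscreteTopology (altGroup α) := Finite.instDiscreteTopology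
      exact inferInstance
  | inr hinf =>
      refine ⟨fun n => {f : altGroup α | (sp (f : Perm α)).ncard = n}, ?_, fun n => ?_⟩
      · ext f
        simp only [Set.mem_iUnion, Set.mem_setOf_eq, Set.mem_univ, iff_true]
        exact ⟨_, rfl⟩
      · apply discreteTopology_iff_isOpen_singleton.mpr
        rintro ⟨f, hf⟩
        -- notation
        set S : Set α := sp (f : Perm α) with hSdef
        have hSfin : S.Finite := sp_finite f.2
        -- fresh points outside S
        obtain emb := Set.Infinite.natEmbedding _ (hSfin.infinite_compl)
        set a : ℕ → α := fun j => (emb (2 * j) : α) with ha_def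
        set b : ℕ → α := fun j => (emb (2 * j + 1) : α) with hb_def
        have hinj : ∀ i j : ℕ, (emb i : α) = (emb j : α) → i = j :=
          fun i j h => emb.injective (Subtype.ext h)
        have haS : ∀ j, a j ∉ S := fun j => (emb (2 * j)).2
        have hbS : ∀ j, b j ∉ S := fun j => (emb (2 * j + 1)).2
        have hab : ∀ j, a j ≠ b j := fun j h => by have := hinj _ _ h; omega
        -- the elements used in the equations
        have hw : ∀ p q r : α, p ≠ q → q ≠ r → cyc p q r ∈ altGroup α :=
          fun p q r h1 h2 => cyc_mem h1 h2
        let w : α → α → α → altGroup α := fun p q r =>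
          if h : p ≠ q ∧ q ≠ r then ⟨cyc p q r, cyc_mem h.1 h.2⟩ else 1
        have hwval : ∀ p q r : α, p ≠ q → q ≠ r → ((w p q r : altGroup α) : Perm α) = cyc p q r := by
          intro p q r h1 h2
          simp only [w, dif_pos (And.intro h1 h2)]
        -- the open set isolating f
        set U : Set (altGroup α) :=
          (⋂ s ∈ S, ⋂ j ∈ Set.Iic n, {x : altGroup α | x * w s (a j) (b j) ≠ w s (a j) (b j) * x}) ∩
          (⋂ s ∈ S, ⋂ p ∈ S, {x : altGroup α |
              p = (f : Perm α) s ∨ x * w s (a 0) (b 0) ≠ w p (a 0) (b 0) * x}) with hUdef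
        have hUopen : IsOpen U := by
          apply IsOpen.inter
          · exact hSfin.isOpen_biInter fun s _ =>
              (Set.finite_Iic n).isOpen_biInter fun j _ => hne_open _ _
          · refine hSfin.isOpen_biInter fun s _ => hSfin.isOpen_biInter fun p _ => ?_
            by_cases h : p = (f : Perm α) s
            · have : {x : altGroup α |
                  p = (f : Perm α) s ∨ x * w s (a 0) (b 0) ≠ w p (a 0) (b 0) * x} = Set.univ := by
                ext x; simp [h]
              rw [this]; exact isOpen_univ
            · have : {x : altGroup α |
                  p = (f : Perm α) s ∨ x * w s (a 0) (b 0) ≠ w p (a 0) (b 0) * x} =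
                  {x : altGroup α | x * w s (a 0) (b 0) ≠ w p (a 0) (b 0) * x} := by
                ext x; simp [h]
              rw [this]; exact hne_open _ _
        refine isOpen_induced_iff.mpr ⟨U, hUopen, ?_⟩
        ext ⟨g, hg⟩
        simp only [Set.mem_preimage, Set.mem_singleton_iff, Subtype.mk.injEq]
        constructor
        · -- g ∈ U → g = f
          intro hgU
          simp only [hUdef, Set.mem_inter_iff, Set.mem_iInter, Set.mem_setOf_eq] at hgU
          obtain ⟨hgU1, hgU2⟩ := hgU
          by_contra hne
          have hne' : (g : Perm α) ≠ (f : Perm α) := fun h => hne (Subtype.ext h)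
          have hgset : (sp ((g : altGroup α) : Perm α)).ncard = n := hg
          set T : Set α := sp (g : Perm α) with hTdef
          have hTfin : T.Finite := sp_finite g.2
          by_cases hfix : ∃ s ∈ S, (g : Perm α) s = s
          · obtain ⟨s, hsS, hgs⟩ := hfix
            -- pigeonhole: some pair (a j, b j), j ≤ n, is disjoint from T
            have hpig : ∃ j ≤ n, a j ∉ T ∧ b j ∉ T := by
              by_contra hcon
              push_neg at hcon
              set F : Fin (n + 1) → α := fun j =>
                if a (j : ℕ) ∈ T then a (j : ℕ) else b (j : ℕ) with hF
              have hFmem : ∀ j, F j ∈ T := by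
                intro j
                have hx := hcon (j : ℕ) (Nat.lt_succ_iff.mp j.isLt)
                by_cases hj : a (j : ℕ) ∈ T
                · simpa [hF, hj] using hj
                · simpa [hF, hj] using hx hj
              have hFinj : Function.Injective F := by
                intro i j hij
                simp only [hF] at hij
                apply Fin.ext
                by_cases hi : a (i : ℕ) ∈ T <;> by_cases hj : a (j : ℕ) ∈ T <;>
                  simp only [hi, hj, if_pos, if_neg, if_true, if_false] at hij <;>
                  [skip; skip; skip; skip] <;>
                  · have := hinj _ _ hij
                    omega
              have h1 : (Set.range F).ncard = n + 1 := by
                rw [← Set.image_univ, Set.ncard_image_of_injective _ hFinj, Set.ncard_univ]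
                simp
              have h2 : (Set.range F).ncard ≤ T.ncard :=
                Set.ncard_le_ncard (Set.range_subset_iff.mpr hFmem) hTfin
              rw [h1, hgset] at h2
              omega
            obtain ⟨j, hj, hajT, hbjT⟩ := hpig
            -- g commutes with the 3-cycle
            have hcomm : (g : Perm α) * cyc s (a j) (b j) = cyc s (a j) (b j) * (g : Perm α) := by
              apply commute_of_fixes
              intro x hx
              rcases sp_cyc_subset s (a j) (b j) hx with h | h | h
              · rw [h]; exact hgs
              · rw [h]; exact not_not.mp hajT
              · rw [h]; exact not_not.mp hbjT
            have hsa : s ≠ a j := fun h => haS j (h ▸ hsS)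
            have := hgU1 s hsS j hj
            apply this
            apply Subtype.ext
            simp only [Subgroup.coe_mul, hwval s (a j) (b j) hsa (hab j)]
            exact hcomm
          · -- g moves every point of S, hence sp g = S
            push_neg at hfix
            have hsub : S ⊆ T := fun s hs => hfix s hs
            have hST : S = T := by
              apply Set.eq_of_subset_of_ncard_le hsub _ hTfin
              rw [hgset, hf]
            obtain ⟨s, hs⟩ : ∃ s, (g : Perm α) s ≠ (f : Perm α) s := by
              by_contra hcon
              push_neg at hcon
              exact hne' (Equiv.ext hcon)
            have hsS : s ∈ S := by
              by_contra hsS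
              have h1 : (g : Perm α) s = s := not_not.mp (fun h => hsS (hST ▸ h))
              have h2 : (f : Perm α) s = s := not_not.mp hsS
              exact hs (by rw [h1, h2])
            have htT : (g : Perm α) s ∈ T := sp_apply_mem (hsub hsS)
            have htS : (g : Perm α) s ∈ S := hST ▸ htT
            have hga : (g : Perm α) (a 0) = a 0 := not_not.mp (fun h => haS 0 (hST ▸ h))
            have hgb : (g : Perm α) (b 0) = b 0 := not_not.mp (fun h => hbS 0 (hST ▸ h))
            have hconj : (g : Perm α) * cyc s (a 0) (b 0) =
                cyc ((g : Perm α) s) (a 0) (b 0) * (g : Perm α) := by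
              have := cyc_conj (g : Perm α) s (a 0) (b 0)
              rw [hga, hgb] at this
              calc (g : Perm α) * cyc s (a 0) (b 0)
                  = ((g : Perm α) * cyc s (a 0) (b 0) * (g : Perm α)⁻¹) * (g : Perm α) := by group
                _ = cyc ((g : Perm α) s) (a 0) (b 0) * (g : Perm α) := by rw [this]
            have hsa : s ≠ a 0 := fun h => haS 0 (h ▸ hsS)
            have hta : (g : Perm α) s ≠ a 0 := fun h => haS 0 (h ▸ htS)
            have := hgU2 s hsS ((g : Perm α) s) htS
            rcases this with h | h
            · exact hs h
            · apply h
              apply Subtype.ext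
              simp only [Subgroup.coe_mul, hwval s (a 0) (b 0) hsa (hab 0),
                hwval ((g : Perm α) s) (a 0) (b 0) hta (hab 0)]
              exact hconj
        · -- f ∈ U
          rintro rfl
          simp only [hUdef, Set.mem_inter_iff, Set.mem_iInter, Set.mem_setOf_eq]
          constructor
          · intro s hsS j hj heq
            have hsa : s ≠ a j := fun h => haS j (h ▸ hsS)
            have heq' : (g : Perm α) * cyc s (a j) (b j) = cyc s (a j) (b j) * (g : Perm α) := by
              have := congrArg (Subtype.val) heq
              simpa only [Subgroup.coe_mul, hwval s (a j) (b j) hsa (hab j)] using this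
            have happ := DFunLike.congr_fun heq' s
            simp only [Perm.mul_apply] at happ
            -- LHS: g (cyc s) = g (a j) = a j;  RHS: cyc (g s) = g s
            have hfs : (g : Perm α) s ∈ S := sp_apply_mem hsS
            have h1 : cyc s (a j) (b j) s = a j :=
              cyc_apply_fst hsa (fun h => hbS j (h ▸ hsS))
            have h2 : (g : Perm α) (a j) = a j := not_not.mp (haS j)
            have h3 : cyc s (a j) (b j) ((g : Perm α) s) = (g : Perm α) s :=
              cyc_apply_of_ne hsS (fun h => haS j (h ▸ hfs)) (fun h => hbS j (h ▸ hfs))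
            rw [h1, h2, h3] at happ
            exact haS j (happ ▸ hfs)
          · intro s hsS p hpS
            by_cases hp : p = (g : Perm α) s
            · exact Or.inl hp
            refine Or.inr (fun heq => ?_)
            have hsa : s ≠ a 0 := fun h => haS 0 (h ▸ hsS)
            have hpa : p ≠ a 0 := fun h => haS 0 (h ▸ hpS)
            have heq' : (g : Perm α) * cyc s (a 0) (b 0) = cyc p (a 0) (b 0) * (g : Perm α) := by
              have := congrArg (Subtype.val) heq
              simpa only [Subgroup.coe_mul, hwval s (a 0) (b 0) hsa (hab 0),
                hwval p (a 0) (b 0) hpa (hab 0)] using this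
            have happ := DFunLike.congr_fun heq' (b 0)
            simp only [Perm.mul_apply] at happ
            have h1 : cyc s (a 0) (b 0) (b 0) = s := cyc_apply_thrd _ _ _
            have h2 : (g : Perm α) (b 0) = b 0 := not_not.mp (hbS 0)
            have h3 : cyc p (a 0) (b 0) (b 0) = p := cyc_apply_thrd _ _ _
            rw [h1, h2, h3] at happ
            exact hp (happ ▸ rfl)
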